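/- Let N be a finite nonempty multiset of real numbers (agent positions) partitioned into a finite nonempty collection G of nonempty groups, and A a finite nonempty set of real numbers (alternative positions). Let L = min A and U = max A. Suppose r : G → {L, U} assigns to each group g an element of {L,U} maximizing the group welfare over {L,U}, i.e., for y ∈ {L,U}, Σ_{p∈g} |p − y| ≤ Σ_{p∈g} |p − r(g)|, and suppose w lies in the image of r and maximizes the total size of the groups it represents among the representatives. Then for every alternative o ∈ A, Σ_{p∈N} |p − o| ≤ 3 · Σ_{p∈N} |p − w|. -/

import Mathlib

private lemma msum_nonneg' (m : Multiset ℝ) (x : ℝ) :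
    0 ≤ (m.map (fun p => |p - x|)).sum := by
  apply Multiset.sum_nonneg
  intro a ha
  obtain ⟨p, _, rfl⟩ := Multiset.mem_map.mp ha
  exact abs_nonneg _

private lemma msum_triangle' (m : Multiset ℝ) (x y : ℝ) :
    (m.map (fun p => |p - x|)).sum ≤
      (m.map (fun p => |p - y|)).sum + (Multiset.card m : ℝ) * |y - x| := by
  calc (m.map (fun p => |p - x|)).sum
      ≤ (m.map (fun p => |p - y| + |y - x|)).sum := by
        apply Multiset.sum_map_le_sum_map
        intro p _
        calc |p - x| = |(p - y) + (y - x)| := by ring_nf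
          _ ≤ |p - y| + |y - x| := abs_add_le _ _
    _ = (m.map (fun p => |p - y|)).sum + (Multiset.card m : ℝ) * |y - x| := by
        rw [Multiset.sum_map_add]
        congr 1
        simp [Multiset.map_const', Multiset.sum_replicate, nsmul_eq_mul]

private lemma msum_lower' (m : Multiset ℝ) (x y : ℝ) :
    (Multiset.card m : ℝ) * |x - y| ≤
      (m.map (fun p => |p - x|)).sum + (m.map (fun p => |p - y|)).sum := by
  calc (Multiset.card m : ℝ) * |x - y|
      = (m.map (fun _ => |x - y|)).sum := by
        simp [Multiset.map_const', Multiset.sum_replicate, nsmul_eq_mul]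
    _ ≤ (m.map (fun p => |p - x| + |p - y|)).sum := by
        apply Multiset.sum_map_le_sum_map
        intro p _
        calc |x - y| = |(x - p) + (p - y)| := by ring_nf
          _ ≤ |x - p| + |p - y| := abs_add_le _ _
          _ = |p - x| + |p - y| := by rw [abs_sub_comm x p]
    _ = _ := Multiset.sum_map_add

private lemma msum_convex' (m : Multiset ℝ) (x y o a b : ℝ) (ha : 0 ≤ a) (hb : 0 ≤ b)
    (ho : o = a * x + b * y) (hab : a + b = 1) :
    (m.map (fun p => |p - o|)).sum ≤
      a * (m.map (fun p => |p - x|)).sum + b * (m.map (fun p => |p - y|)).sum := by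
  calc (m.map (fun p => |p - o|)).sum
      ≤ (m.map (fun p => a * |p - x| + b * |p - y|)).sum := by
        apply Multiset.sum_map_le_sum_map
        intro p _
        have h1 : p - o = a * (p - x) + b * (p - y) := by
          linear_combination (-p) * hab - ho
        calc |p - o| = |a * (p - x) + b * (p - y)| := by rw [h1]
          _ ≤ |a * (p - x)| + |b * (p - y)| := abs_add_le _ _
          _ = a * |p - x| + b * |p - y| := by
              rw [abs_mul, abs_mul, abs_of_nonneg ha, abs_of_nonneg hb]
    _ = _ := by
        rw [Multiset.sum_map_add]
        congr 1 <;> exact Multiset.sum_map_mul_left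

/-- On the line, the Max-Weight-of-Optimal mechanism run on the two
extreme alternatives has distortion at most 3. -/
theorem maxWeightOfOptimal_line_distortion_three
    {κ : Type*} [DecidableEq κ]
    (G : Finset κ) (hG : G.Nonempty)
    (grp : κ → Multiset ℝ) (hgne : ∀ g ∈ G, grp g ≠ 0)
    (A : Finset ℝ) (hA : A.Nonempty)
    (L U : ℝ) (hL : L = A.min' hA) (hU : U = A.max' hA)
    (r : κ → ℝ) (hrLU : ∀ g ∈ G, r g = L ∨ r g = U)
    (hropt : ∀ g ∈ G, ∀ y : ℝ, y = L ∨ y = U →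
      ((grp g).map (fun p => |p - y|)).sum ≤ ((grp g).map (fun p => |p - r g|)).sum)
    (w : ℝ) (hw : ∃ g ∈ G, r g = w)
    (hwmax : ∀ x : ℝ, (∃ g ∈ G, r g = x) →
      ∑ g ∈ G.filter (fun g => r g = x), Multiset.card (grp g) ≤
        ∑ g ∈ G.filter (fun g => r g = w), Multiset.card (grp g))
    (o : ℝ) (ho : o ∈ A) :
    ∑ g ∈ G, ((grp g).map (fun p => |p - o|)).sum ≤
      3 * ∑ g ∈ G, ((grp g).map (fun p => |p - w|)).sum := by
  set F : κ → ℝ → ℝ := fun g x => ((grp g).map (fun p => |p - x|)).sum with hF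
  have hFnn : ∀ (g : κ) (x : ℝ), 0 ≤ F g x := fun g x => msum_nonneg' _ _
  have hfnn : ∀ x : ℝ, 0 ≤ ∑ g ∈ G, F g x :=
    fun x => Finset.sum_nonneg fun g _ => hFnn g x
  obtain ⟨g0, hg0, hg0w⟩ := hw
  have hwLU : w = L ∨ w = U := hg0w ▸ hrLU g0 hg0
  -- Key claim: both extremes have welfare at most 3 times that of w.
  have key : ∀ x : ℝ, (x = L ∨ x = U) →
      ∑ g ∈ G, F g x ≤ 3 * ∑ g ∈ G, F g w := by
    intro x hx
    by_cases hxw : x = w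
    · subst hxw; linarith [hfnn x]
    · have hrxw : ∀ g ∈ G, r g = w ∨ r g = x := by
        intro g hg
        rcases hrLU g hg with h | h <;> rcases hwLU with h' | h' <;>
          rcases hx with h'' | h'' <;>
          first
            | (left; rw [h, ← h'])
            | (right; rw [h, ← h''])
            | (exact absurd (h''.trans h'.symm) hxw)
      have d0 : (0:ℝ) ≤ |w - x| := abs_nonneg _
      -- split the sum over groups represented by w and the rest
      have hsplit : ∀ z : ℝ, ∑ g ∈ G, F g z =
          ∑ g ∈ G.filter (fun g => r g = w), F g z +
          ∑ g ∈ G.filter (fun g => ¬ r g = w), F g z :=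
        fun z => (Finset.sum_filter_add_sum_filter_not G _ _).symm
      have hfeq : G.filter (fun g => ¬ r g = w) = G.filter (fun g => r g = x) := by
        ext g
        simp only [Finset.mem_filter]
        constructor
        · rintro ⟨hg, hne⟩
          exact ⟨hg, (hrxw g hg).resolve_left hne⟩
        · rintro ⟨hg, hre⟩
          exact ⟨hg, by rw [hre]; exact hxw⟩
      have T1 : ∑ g ∈ G.filter (fun g => r g = w), F g x ≤
          ∑ g ∈ G.filter (fun g => r g = w), F g w := by
        apply Finset.sum_le_sum
        intro g hg
        obtain ⟨hgG, hgw⟩ := Finset.mem_filter.mp hg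
        have := hropt g hgG x hx
        rwa [hgw] at this
      have T2 : ∑ g ∈ G.filter (fun g => ¬ r g = w), F g x ≤
          ∑ g ∈ G.filter (fun g => ¬ r g = w), F g w +
          (↑(∑ g ∈ G.filter (fun g => ¬ r g = w), Multiset.card (grp g)) : ℝ) * |w - x| := by
        have : ∑ g ∈ G.filter (fun g => ¬ r g = w), F g x ≤
            ∑ g ∈ G.filter (fun g => ¬ r g = w),
              (F g w + (Multiset.card (grp g) : ℝ) * |w - x|) :=
          Finset.sum_le_sum fun g _ => msum_triangle' (grp g) x w
        rw [Finset.sum_add_distrib] at this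
        refine this.trans (le_of_eq ?_)
        congr 1
        push_cast
        rw [Finset.sum_mul]
      have T3 : (↑(∑ g ∈ G.filter (fun g => ¬ r g = w), Multiset.card (grp g)) : ℝ) ≤
          (↑(∑ g ∈ G.filter (fun g => r g = w), Multiset.card (grp g)) : ℝ) := by
        rw [hfeq]
        have : ∑ g ∈ G.filter (fun g => r g = x), Multiset.card (grp g) ≤
            ∑ g ∈ G.filter (fun g => r g = w), Multiset.card (grp g) := by
          by_cases hne : (G.filter (fun g => r g = x)).Nonempty
          · obtain ⟨g1, hg1⟩ := hne
            obtain ⟨hg1G, hg1x⟩ := Finset.mem_filter.mp hg1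
            exact hwmax x ⟨g1, hg1G, hg1x⟩
          · rw [Finset.not_nonempty_iff_eq_empty.mp hne, Finset.sum_empty]
            exact Nat.zero_le _
        exact_mod_cast this
      have T4 : (↑(∑ g ∈ G.filter (fun g => r g = w), Multiset.card (grp g)) : ℝ) * |w - x| ≤
          2 * ∑ g ∈ G.filter (fun g => r g = w), F g w := by
        push_cast
        rw [Finset.sum_mul, Finset.mul_sum]
        apply Finset.sum_le_sum
        intro g hg
        obtain ⟨hgG, hgw⟩ := Finset.mem_filter.mp hg
        have h1 := msum_lower' (grp g) w x
        have h2 := hropt g hgG x hx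
        rw [hgw] at h2
        simp only [hF] at *
        linarith
      have hBnn : 0 ≤ ∑ g ∈ G.filter (fun g => ¬ r g = w), F g w :=
        Finset.sum_nonneg fun g _ => hFnn g w
      have hmul : (↑(∑ g ∈ G.filter (fun g => ¬ r g = w), Multiset.card (grp g)) : ℝ) * |w - x| ≤
          (↑(∑ g ∈ G.filter (fun g => r g = w), Multiset.card (grp g)) : ℝ) * |w - x| :=
        mul_le_mul_of_nonneg_right T3 d0
      rw [hsplit x, hsplit w]
      linarith
  -- o lies between L and U, and welfare is convex
  have hLo : L ≤ o := hL ▸ A.min'_le o ho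
  have hoU : o ≤ U := hU ▸ A.le_max' o ho
  by_cases hLU : L = U
  · have : o = L := le_antisymm (hLU ▸ hoU) hLo
    rw [this]
    exact key L (Or.inl rfl)
  · have hlt : L < U := lt_of_le_of_ne (hLo.trans hoU) hLU
    have hd : (0:ℝ) < U - L := by linarith
    set a : ℝ := (U - o) / (U - L) with ha'
    set b : ℝ := (o - L) / (U - L) with hb'
    have ha : 0 ≤ a := div_nonneg (by linarith) hd.le
    have hb : 0 ≤ b := div_nonneg (by linarith) hd.le
    have hab : a + b = 1 := by
      rw [ha', hb']
      field_simp
      ring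
    have hoab : o = a * L + b * U := by
      rw [ha', hb']
      field_simp
      ring
    calc ∑ g ∈ G, F g o ≤ ∑ g ∈ G, (a * F g L + b * F g U) :=
          Finset.sum_le_sum fun g _ => msum_convex' (grp g) L U o a b ha hb hoab hab
      _ = a * ∑ g ∈ G, F g L + b * ∑ g ∈ G, F g U := by
          rw [Finset.sum_add_distrib, Finset.mul_sum, Finset.mul_sum]
      _ ≤ a * (3 * ∑ g ∈ G, F g w) + b * (3 * ∑ g ∈ G, F g w) := by
          gcongr
          · exact key L (Or.inl rfl)
          · exact key U (Or.inr rfl)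
      _ = 3 * ∑ g ∈ G, F g w := by rw [← add_mul, hab, one_mul]
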